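/- Let F : ℝ³ → ℝ be differentiable and satisfy condition (F9). Then F is strictly convex on ℝ³. -/
import Mathlib


open RealInnerProductSpace

noncomputable section

/-- Condition (F9) for a differentiable `F : ℝ³ → ℝ` with gradient `f = ∇F`:
`((t²−1)/2)⟨f(u),u⟩ + t⟨f(u),v⟩ + F(u) − F(tu+v) ≤ 0` for all `t ≥ 0`, `u, v ∈ ℝ³`,
with strict inequality whenever `u ≠ tu + v`. -/
def CondF9 (F : EuclideanSpace ℝ (Fin 3) → ℝ) : Prop :=
  ∀ t : ℝ, 0 ≤ t → ∀ u v : EuclideanSpace ℝ (Fin 3),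
    (t ^ 2 - 1) / 2 * ⟪gradient F u, u⟫ + t * ⟪gradient F u, v⟫ + F u - F (t • u + v) ≤ 0 ∧
    (u ≠ t • u + v →
      (t ^ 2 - 1) / 2 * ⟪gradient F u, u⟫ + t * ⟪gradient F u, v⟫ + F u - F (t • u + v) < 0)

/-- (cf. Remark 5.4 c)).
If `F : ℝ³ → ℝ` is differentiable and satisfies (F9), then `F` is strictly convex. -/
theorem statement11 (F : EuclideanSpace ℝ (Fin 3) → ℝ) (hF : Differentiable ℝ F)
    (hF9 : CondF9 F) :
    StrictConvexOn ℝ Set.univ F := by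
  refine ⟨convex_univ, fun x _ y _ hxy a b ha hb hab => ?_⟩
  set z : EuclideanSpace ℝ (Fin 3) := a • x + b • y with hz
  have hzx : z ≠ x := by
    intro h
    apply hxy
    have : b • y = b • x := by
      have := h
      rw [hz] at this
      have hx : a • x + b • y = (a + b) • x := by
        rw [hab, one_smul]; exact this
      rw [add_smul] at hx
      exact add_left_cancel hx
    have := smul_right_injective (EuclideanSpace ℝ (Fin 3)) hb.ne' this
    exact this.symm
  have hzy : z ≠ y := by
    intro h
    apply hxy
    have : a • x = a • y := by
      have := h
      rw [hz] at this
      have hy : a • x + b • y = (a + b) • y := by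
        rw [hab, one_smul]; exact this
      rw [add_smul] at hy
      exact add_right_cancel hy
    exact smul_right_injective (EuclideanSpace ℝ (Fin 3)) ha.ne' this
  have key : ∀ w : EuclideanSpace ℝ (Fin 3), z ≠ w →
      F z + ⟪gradient F z, w - z⟫ < F w := by
    intro w hw
    have hne : z ≠ (1 : ℝ) • z + (w - z) := by
      rw [one_smul, add_sub_cancel]; exact hw
    have h := (hF9 1 zero_le_one z (w - z)).2 hne
    rw [one_smul, add_sub_cancel] at h
    have hc : ((1:ℝ) ^ 2 - 1) / 2 = 0 := by norm_num
    rw [hc, zero_mul, one_mul] at h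
    linarith
  have h1 := key x hzx
  have h2 := key y hzy
  have hcomb : a • (x - z) + b • (y - z) = 0 := by
    have he : a • (x - z) + b • (y - z) = (a • x + b • y) - (a + b) • z := by
      rw [smul_sub, smul_sub, add_smul]; abel
    rw [he, hab, one_smul, ← hz, sub_self]
  have hinner : a * ⟪gradient F z, x - z⟫ + b * ⟪gradient F z, y - z⟫ = 0 := by
    have : ⟪gradient F z, a • (x - z) + b • (y - z)⟫ = (0 : ℝ) := by
      rw [hcomb, inner_zero_right]
    rw [inner_add_right, inner_smul_right, inner_smul_right] at this
    linarith
  have goal : F z < a * F x + b * F y := by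
    have m1 := mul_lt_mul_of_pos_left h1 ha
    have m2 := mul_lt_mul_of_pos_left h2 hb
    have hs : a * F z + b * F z = F z := by rw [← add_mul, hab, one_mul]
    nlinarith [hs, hinner]
  simpa [hz, smul_eq_mul] using goal

end
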